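/- For a ≥ 2 and an element l of ⟨a, a+1⟩ with l = a*x + y and 0 ≤ y ≤ x, the representation is unique among representations l = a*x' + y' with 0 ≤ y' ≤ x' if and only if x - a ≤ y ≤ a - 1 (where x - a ≤ y is automatic when x < a). -/
import Mathlib


theorem stmt7 (a x y : ℕ) (ha : 2 ≤ a) (hyx : y ≤ x) :
    (∀ x' y' : ℕ, y' ≤ x' → a * x + y = a * x' + y' → x' = x ∧ y' = y) ↔
      ((x : ℤ) - a ≤ y ∧ (y : ℤ) ≤ a - 1) := by
  constructor
  · intro h
    constructor
    · by_contra hc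
      push_neg at hc
      have hx : y + a + 1 ≤ x := by omega
      obtain ⟨x0, rfl⟩ : ∃ x0, x = x0 + 1 := ⟨x - 1, by omega⟩
      have := h x0 (y + a) (by omega) (by ring)
      omega
    · by_contra hc
      push_neg at hc
      have hy : a ≤ y := by omega
      obtain ⟨y0, rfl⟩ : ∃ y0, y = y0 + a := ⟨y - a, by omega⟩
      have := h (x + 1) y0 (by omega) (by ring)
      omega
  · rintro ⟨h1, h2⟩ x' y' hy' heq
    have hy : y + 1 ≤ a := by omega
    have hx : x ≤ y + a := by omega
    rcases lt_trichotomy x x' with h | h | h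
    · exfalso
      have := Nat.mul_le_mul_left a (show x + 1 ≤ x' from h)
      rw [show a * (x + 1) = a * x + a from by ring] at this
      omega
    · subst h
      exact ⟨rfl, by omega⟩
    · exfalso
      have := Nat.mul_le_mul_left a (show x' + 1 ≤ x from h)
      rw [show a * (x' + 1) = a * x' + a from by ring] at this
      omega
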